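/- Let Δ be a PR complex and suppose σ_1, σ_2 are faces of Δ with H̃_{i_1}(link_Δ σ_1) ≠ 0 and H̃_{i_2}(link_Δ σ_2) ≠ 0 being the unique nontrivial homologies of their links. If |σ_1| < |σ_2| then i_1 > i_2. -/

import Mathlib

open Finset
open scoped Classical

/-- An abstract simplicial complex: a collection of finite subsets of the
vertex type `V` closed under taking subsets. -/
def IsComplex {V : Type} (K : Set (Finset V)) : Prop :=
  ∀ s ∈ K, ∀ t ⊆ s, t ∈ K

/-- The link of a face `σ` in `K`: all faces `τ` disjoint from `σ` with `σ ∪ τ ∈ K`. -/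
def link {V : Type} [DecidableEq V] (K : Set (Finset V)) (σ : Finset V) : Set (Finset V) :=
  {τ | Disjoint σ τ ∧ σ ∪ τ ∈ K}

theorem link_isComplex {V : Type} [DecidableEq V] {K : Set (Finset V)} (hK : IsComplex K)
    (σ : Finset V) : IsComplex (link K σ) := by
  intro s hs t ht
  exact ⟨hs.1.mono_right ht, hK _ hs.2 _ (Finset.union_subset_union_right ht)⟩

/-- The incidence sign of a vertex `x` with respect to a face `σ`, relative to a fixed
(arbitrary) well-ordering of the vertices. -/
noncomputable def bdrySign {V : Type} (σ : Finset V) (x : V) : ℤ :=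
  (-1 : ℤ) ^ (σ.filter (fun y => WellOrderingRel y x)).card

/-- The total (reduced) simplicial chain module of `K` with coefficients in `𝕜`:
functions from the faces of `K` (including the empty face) to `𝕜`. -/
abbrev TotalChains (𝕜 : Type) [Field 𝕜] {V : Type} (K : Set (Finset V)) : Type :=
  {s : Finset V // s ∈ K} → 𝕜

/-- The simplicial boundary operator on the total chain module, written in terms of
cofaces: `(∂c)(τ) = Σ_{x ∉ τ, τ ∪ {x} ∈ K} ± c(τ ∪ {x})`. -/
noncomputable def bdryMap (𝕜 : Type) [Field 𝕜] {V : Type} [DecidableEq V] [Fintype V]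
    (K : Set (Finset V)) : TotalChains 𝕜 K →ₗ[𝕜] TotalChains 𝕜 K where
  toFun c := fun τ => ∑ x ∈ τ.1ᶜ,
    if h : insert x τ.1 ∈ K then bdrySign τ.1 x • c ⟨insert x τ.1, h⟩ else 0
  map_add' c d := by
    funext τ
    rw [Pi.add_apply, ← Finset.sum_add_distrib]
    refine Finset.sum_congr rfl fun x _ => ?_
    split
    · rw [Pi.add_apply, smul_add]
    · rw [add_zero]
  map_smul' a c := by
    funext τ
    rw [RingHom.id_apply, Pi.smul_apply, Finset.smul_sum]
    refine Finset.sum_congr rfl fun x _ => ?_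
    split
    · rw [Pi.smul_apply, smul_comm]
    · rw [smul_zero]

/-- The submodule of chains supported on faces of cardinality `i + 1`
(the chains of homological degree `i`). -/
def degChains (𝕜 : Type) [Field 𝕜] {V : Type} (K : Set (Finset V)) (i : ℤ) :
    Submodule 𝕜 (TotalChains 𝕜 K) where
  carrier := {c | ∀ τ : {s : Finset V // s ∈ K}, (τ.1.card : ℤ) ≠ i + 1 → c τ = 0}
  add_mem' := by
    intro a b ha hb τ hτ
    rw [Pi.add_apply, ha τ hτ, hb τ hτ, add_zero]
  zero_mem' := fun τ _ => rfl
  smul_mem' := by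
    intro a c hc τ hτ
    rw [Pi.smul_apply, hc τ hτ, smul_zero]

/-- The `i`-th reduced simplicial homology of the complex `K` over the field `𝕜`:
degree-`i` cycles modulo boundaries of degree-`(i+1)` chains. -/
noncomputable abbrev redHomology (𝕜 : Type) [Field 𝕜] {V : Type} [DecidableEq V] [Fintype V]
    (K : Set (Finset V)) (i : ℤ) : Type :=
  ↥(degChains 𝕜 K i ⊓ LinearMap.ker (bdryMap 𝕜 K)) ⧸
    Submodule.comap (degChains 𝕜 K i ⊓ LinearMap.ker (bdryMap 𝕜 K)).subtype
      (Submodule.map (bdryMap 𝕜 K) (degChains 𝕜 K (i + 1)))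

/-- A simplicial complex is PR (over `𝕜`) if no two faces of different cardinalities
have links with nontrivial reduced homology in the same degree. -/
def IsPR (𝕜 : Type) [Field 𝕜] {V : Type} [DecidableEq V] [Fintype V]
    (K : Set (Finset V)) : Prop :=
  ∀ i : ℤ, -1 ≤ i → ∀ σ ∈ K, ∀ τ ∈ K,
    Nontrivial (redHomology 𝕜 (link K σ) i) → Nontrivial (redHomology 𝕜 (link K τ) i) →
      σ.card = τ.card

section PRDev
variable {𝕜 : Type} [Field 𝕜] {V : Type} [DecidableEq V] [Fintype V]

lemma bdrySign_mul_self (σ : Finset V) (x : V) : bdrySign σ x * bdrySign σ x = 1 := by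
  unfold bdrySign
  rw [← pow_add, ← two_mul, pow_mul]
  norm_num

lemma bdrySign_insert {a : V} {σ : Finset V} (ha : a ∉ σ) (x : V) :
    bdrySign (insert a σ) x = (if WellOrderingRel a x then -1 else 1) * bdrySign σ x := by
  unfold bdrySign
  rw [Finset.filter_insert]
  split
  · rw [Finset.card_insert_of_notMem (fun h => ha (Finset.mem_filter.mp h).1), pow_succ]
    ring
  · rw [one_mul]

lemma sign_identity {G : Finset V} {x v : V} (hx : x ∉ G) (hv : v ∉ G) (hxv : x ≠ v) :
    bdrySign G x * bdrySign (insert x G) v = -(bdrySign G v * bdrySign (insert v G) x) := by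
  rw [bdrySign_insert hx v, bdrySign_insert hv x]
  have htri : WellOrderingRel x v ∨ WellOrderingRel v x := by
    rcases trichotomous_of (@WellOrderingRel V) x v with h1|h1|h1
    · exact Or.inl h1
    · exact absurd h1 hxv
    · exact Or.inr h1
  rcases htri with h | h
  · have h2 : ¬ WellOrderingRel v x := fun h2 => (Std.Asymm.asymm _ _ h) h2
    rw [if_pos h, if_neg h2]; ring
  · have h2 : ¬ WellOrderingRel x v := fun h2 => (Std.Asymm.asymm _ _ h) h2
    rw [if_neg h2, if_pos h]; ring

lemma sign_identity' {G : Finset V} {x v : V} (hx : x ∉ G) (hv : v ∉ G) (hxv : x ≠ v) :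
    bdrySign (insert v G) x * bdrySign (insert x G) v = -(bdrySign G v * bdrySign G x) := by
  have h1 := sign_identity hx hv hxv
  have h2 := bdrySign_mul_self G x
  have h3 : bdrySign G x * (bdrySign G x * bdrySign (insert x G) v)
      = bdrySign G x * (-(bdrySign G v * bdrySign (insert v G) x)) := by rw [h1]
  rw [← mul_assoc, h2, one_mul] at h3
  rw [h3]
  have h4 := bdrySign_mul_self (insert v G) x
  calc bdrySign (insert v G) x * (bdrySign G x * -(bdrySign G v * bdrySign (insert v G) x))
      = -((bdrySign (insert v G) x * bdrySign (insert v G) x) * (bdrySign G v * bdrySign G x)) := by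
        ring
    _ = -(bdrySign G v * bdrySign G x) := by rw [h4, one_mul]

lemma sum_pairs_zero {α β : Type} [AddCommGroup β] (s : Finset α) (t : α → Finset α)
    (F : α → α → β) (hsym : ∀ x ∈ s, ∀ y ∈ t x, y ∈ s ∧ x ∈ t y)
    (hne : ∀ x ∈ s, ∀ y ∈ t x, y ≠ x)
    (hanti : ∀ x ∈ s, ∀ y ∈ t x, F x y + F y x = 0) :
    ∑ x ∈ s, ∑ y ∈ t x, F x y = 0 := by
  rw [Finset.sum_sigma' s t F]
  refine Finset.sum_involution (fun p _ => ⟨p.2, p.1⟩) ?_ ?_ ?_ ?_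
  · rintro ⟨x, y⟩ hp
    have h := Finset.mem_sigma.mp hp
    exact hanti x h.1 y h.2
  · rintro ⟨x, y⟩ hp _
    intro hcon
    exact hne x (Finset.mem_sigma.mp hp).1 y (Finset.mem_sigma.mp hp).2 (congrArg Sigma.fst hcon)
  · rintro ⟨x, y⟩ hp
    have h := Finset.mem_sigma.mp hp
    exact Finset.mem_sigma.mpr ⟨(hsym x h.1 y h.2).1, (hsym x h.1 y h.2).2⟩
  · rintro ⟨x, y⟩ _
    rfl

lemma bdryMap_apply {K : Set (Finset V)} (c : TotalChains 𝕜 K) (τ : {s : Finset V // s ∈ K}) :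
    bdryMap 𝕜 K c τ = ∑ x ∈ τ.1ᶜ,
      if h : insert x τ.1 ∈ K then bdrySign τ.1 x • c ⟨insert x τ.1, h⟩ else 0 := rfl

lemma bdry_bdry {K : Set (Finset V)} (hK : IsComplex K) (c : TotalChains 𝕜 K) :
    bdryMap 𝕜 K (bdryMap 𝕜 K c) = 0 := by
  funext τ
  rw [bdryMap_apply, Pi.zero_apply]
  have step : ∀ x ∈ τ.1ᶜ,
      (if h : insert x τ.1 ∈ K then bdrySign τ.1 x • (bdryMap 𝕜 K c) ⟨insert x τ.1, h⟩ else 0)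
      = ∑ y ∈ τ.1ᶜ.erase x,
          if h : insert x τ.1 ∈ K ∧ insert y (insert x τ.1) ∈ K then
            (bdrySign τ.1 x * bdrySign (insert x τ.1) y) • c ⟨insert y (insert x τ.1), h.2⟩
          else 0 := by
    intro x hx
    by_cases h1 : insert x τ.1 ∈ K
    · rw [dif_pos h1, bdryMap_apply, Finset.smul_sum, Finset.compl_insert]
      refine Finset.sum_congr rfl fun y hy => ?_
      by_cases h2 : insert y (insert x τ.1) ∈ K
      · rw [dif_pos h2, dif_pos ⟨h1, h2⟩, smul_smul]
      · rw [dif_neg h2, dif_neg (fun h => h2 h.2), smul_zero]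
    · rw [dif_neg h1]
      exact (Finset.sum_eq_zero fun y hy => by rw [dif_neg (fun h => h1 h.1)]).symm
  refine Eq.trans (Finset.sum_congr rfl step : _ = ∑ x ∈ (τ.1)ᶜ, ∑ y ∈ (τ.1)ᶜ.erase x,
      if h : insert x τ.1 ∈ K ∧ insert y (insert x τ.1) ∈ K then
        (bdrySign τ.1 x * bdrySign (insert x τ.1) y) • c ⟨insert y (insert x τ.1), h.2⟩
      else 0) ?_
  refine sum_pairs_zero _ _ _ ?_ ?_ ?_
  · intro x hx y hy
    refine ⟨(Finset.mem_erase.mp hy).2, Finset.mem_erase.mpr ⟨?_, hx⟩⟩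
    exact fun h => (Finset.mem_erase.mp hy).1 h.symm
  · intro x hx y hy
    exact (Finset.mem_erase.mp hy).1
  · intro x hx y hy
    have hyx : y ≠ x := (Finset.mem_erase.mp hy).1
    have hyn : y ∉ τ.1 := Finset.mem_compl.mp (Finset.mem_erase.mp hy).2
    have hxn : x ∉ τ.1 := Finset.mem_compl.mp hx
    by_cases H : insert y (insert x τ.1) ∈ K
    · have Hc : insert x (insert y τ.1) ∈ K := by rwa [Finset.insert_comm]
      have H1 : insert x τ.1 ∈ K := hK _ H _ (Finset.subset_insert _ _)
      have H2 : insert y τ.1 ∈ K := hK _ Hc _ (Finset.subset_insert _ _)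
      rw [dif_pos ⟨H1, H⟩, dif_pos ⟨H2, Hc⟩]
      have hsub : (⟨insert x (insert y τ.1), Hc⟩ : {s : Finset V // s ∈ K})
          = ⟨insert y (insert x τ.1), H⟩ := Subtype.ext (Finset.insert_comm _ _ _)
      rw [hsub, ← add_smul]
      have hid := sign_identity (G := τ.1) hxn hyn (fun h => hyx h.symm)
      rw [hid]
      simp
    · have Hc : ¬ insert x (insert y τ.1) ∈ K := by rwa [Finset.insert_comm]
      rw [dif_neg (fun h => H h.2), dif_neg (fun h => Hc h.2), add_zero]

end PRDev
section PRDev2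
variable {𝕜 : Type} [Field 𝕜] {V : Type} [DecidableEq V] [Fintype V]

lemma mem_link_iff {A : Set (Finset V)} {v : V} {τ : Finset V} :
    τ ∈ link A {v} ↔ v ∉ τ ∧ insert v τ ∈ A := by
  unfold link
  rw [Set.mem_setOf_eq, Finset.disjoint_singleton_left, Finset.insert_eq]

/-- The deletion of the vertex `v`. -/
def delV {V : Type} (A : Set (Finset V)) (v : V) : Set (Finset V) :=
  {s | s ∈ A ∧ v ∉ s}

/-- Restriction (induced subcomplex) to a vertex set `W`. -/
def res {V : Type} (M : Set (Finset V)) (W : Finset V) : Set (Finset V) :=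
  {s | s ∈ M ∧ s ⊆ W}

lemma res_isComplex {M : Set (Finset V)} (hM : IsComplex M) (W : Finset V) :
    IsComplex (res M W) := fun s hs t ht => ⟨hM _ hs.1 _ ht, ht.trans hs.2⟩

lemma insert_mem_of_mem_link {A : Set (Finset V)} {v : V} {G : Finset V}
    (hG : G ∈ link A {v}) : insert v G ∈ A := (mem_link_iff.mp hG).2

lemma erase_mem_link {A : Set (Finset V)} {v : V} {τ : Finset V} (hτ : τ ∈ A) (hv : v ∈ τ) :
    τ.erase v ∈ link A {v} :=
  mem_link_iff.mpr ⟨Finset.notMem_erase v τ, by rwa [Finset.insert_erase hv]⟩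

/-- Contraction of a chain at the vertex `v`. -/
noncomputable def contrC {V : Type} [DecidableEq V] [Fintype V] (𝕜 : Type) [Field 𝕜]
    (A : Set (Finset V)) (v : V) (z : TotalChains 𝕜 A) : TotalChains 𝕜 (link A {v}) :=
  fun G => bdrySign G.1 v • z ⟨insert v G.1, insert_mem_of_mem_link G.2⟩

/-- Coning of a link chain at the vertex `v`. -/
noncomputable def coneC {V : Type} [DecidableEq V] [Fintype V] (𝕜 : Type) [Field 𝕜]
    (A : Set (Finset V)) (v : V) (p : TotalChains 𝕜 (link A {v})) : TotalChains 𝕜 A :=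
  fun τ => if h : v ∈ τ.1 then bdrySign (τ.1.erase v) v • p ⟨τ.1.erase v, erase_mem_link τ.2 h⟩
    else 0

/-- Extension by zero from the deletion to the whole complex. -/
noncomputable def extC {V : Type} [DecidableEq V] [Fintype V] (𝕜 : Type) [Field 𝕜]
    (A : Set (Finset V)) (v : V) (c : TotalChains 𝕜 (delV A v)) : TotalChains 𝕜 A :=
  fun τ => if h : v ∉ τ.1 then c ⟨τ.1, ⟨τ.2, h⟩⟩ else 0

/-- Restriction of chains to the deletion. -/
noncomputable def restrC {V : Type} [DecidableEq V] [Fintype V] (𝕜 : Type) [Field 𝕜]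
    (A : Set (Finset V)) (v : V) (c : TotalChains 𝕜 A) : TotalChains 𝕜 (delV A v) :=
  fun τ => c ⟨τ.1, τ.2.1⟩

lemma link_insert_mem {A : Set (Finset V)} {v : V} {G : Finset V} (hG : G ∈ link A {v})
    {x : V} (hx : x ≠ v) : insert x G ∈ link A {v} ↔ insert x (insert v G) ∈ A := by
  rw [mem_link_iff, Finset.insert_comm]
  have hvG : v ∉ G := (mem_link_iff.mp hG).1
  simp only [Finset.mem_insert]
  constructor
  · exact fun h => h.2
  · exact fun h => ⟨fun hc => (by tauto : False), h⟩

end PRDev2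
section PRDev3
variable {𝕜 : Type} [Field 𝕜] {V : Type} [DecidableEq V] [Fintype V]

lemma bdry_contr {A : Set (Finset V)} (v : V) (z : TotalChains 𝕜 A)
    (G : {s : Finset V // s ∈ link A {v}}) :
    bdryMap 𝕜 (link A {v}) (contrC 𝕜 A v z) G
      = (-(bdrySign G.1 v)) • bdryMap 𝕜 A z ⟨insert v G.1, insert_mem_of_mem_link G.2⟩ := by
  have hvG : v ∉ G.1 := (mem_link_iff.mp G.2).1
  rw [bdryMap_apply, bdryMap_apply, Finset.smul_sum, Finset.compl_insert]
  rw [← Finset.add_sum_erase _ _ (Finset.mem_compl.mpr hvG)]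
  rw [dif_neg (fun hc => (mem_link_iff.mp hc).1 (Finset.mem_insert_self v G.1)), zero_add]
  refine Finset.sum_congr rfl fun x hx => ?_
  have hxv : x ≠ v := (Finset.mem_erase.mp hx).1
  have hxG : x ∉ G.1 := Finset.mem_compl.mp (Finset.mem_erase.mp hx).2
  by_cases hmem : insert x (insert v G.1) ∈ A
  · have hlk : insert x G.1 ∈ link A {v} := (link_insert_mem G.2 hxv).mpr hmem
    rw [dif_pos hlk, dif_pos hmem]
    simp only [contrC]
    have hsub : (⟨insert v (insert x G.1), insert_mem_of_mem_link hlk⟩ : {s : Finset V // s ∈ A})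
        = ⟨insert x (insert v G.1), hmem⟩ := Subtype.ext (Finset.insert_comm v x G.1)
    rw [hsub, smul_smul, smul_smul]
    have hsc : bdrySign G.1 x * bdrySign (insert x G.1) v
        = -(bdrySign G.1 v) * bdrySign (insert v G.1) x := by
      rw [sign_identity hxG hvG hxv]; ring
    rw [hsc]
  · have hlk : insert x G.1 ∉ link A {v} := fun hc => hmem ((link_insert_mem G.2 hxv).mp hc)
    rw [dif_neg hlk, dif_neg hmem, smul_zero]

lemma bdry_cone {A : Set (Finset V)} (v : V) (p : TotalChains 𝕜 (link A {v}))
    (G : {s : Finset V // s ∈ link A {v}}) :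
    bdryMap 𝕜 A (coneC 𝕜 A v p) ⟨insert v G.1, insert_mem_of_mem_link G.2⟩
      = (-(bdrySign G.1 v)) • bdryMap 𝕜 (link A {v}) p G := by
  have hvG : v ∉ G.1 := (mem_link_iff.mp G.2).1
  rw [bdryMap_apply, bdryMap_apply, Finset.smul_sum, Finset.compl_insert]
  conv_rhs => rw [← Finset.add_sum_erase _ _ (Finset.mem_compl.mpr hvG)]
  rw [dif_neg (fun hc => (mem_link_iff.mp hc).1 (Finset.mem_insert_self v G.1)), smul_zero,
    zero_add]
  refine Finset.sum_congr rfl fun x hx => ?_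
  have hxv : x ≠ v := (Finset.mem_erase.mp hx).1
  have hxG : x ∉ G.1 := Finset.mem_compl.mp (Finset.mem_erase.mp hx).2
  have hvxG : v ∉ insert x G.1 := by
    simp only [Finset.mem_insert]
    push_neg
    exact ⟨fun h => hxv h.symm, hvG⟩
  by_cases hmem : insert x (insert v G.1) ∈ A
  · have hlk : insert x G.1 ∈ link A {v} := (link_insert_mem G.2 hxv).mpr hmem
    rw [dif_pos hmem, dif_pos hlk]
    simp only [coneC]
    rw [dif_pos (Finset.mem_insert_of_mem (Finset.mem_insert_self v G.1))]
    have hE : (insert x (insert v G.1)).erase v = insert x G.1 := by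
      rw [Finset.insert_comm, Finset.erase_insert hvxG]
    have hsub : ∀ (h1 : (insert x (insert v G.1)).erase v ∈ link A {v})
        (h2 : insert x G.1 ∈ link A {v}),
        (⟨(insert x (insert v G.1)).erase v, h1⟩ : {s : Finset V // s ∈ link A {v}})
          = ⟨insert x G.1, h2⟩ := fun h1 h2 => Subtype.ext hE
    rw [hsub _ hlk, hE, smul_smul, smul_smul]
    have hsc : bdrySign (insert v G.1) x * bdrySign (insert x G.1) v
        = -(bdrySign G.1 v) * bdrySign G.1 x := by
      rw [sign_identity' hxG hvG hxv]; ring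
    rw [hsc]
  · have hlk : insert x G.1 ∉ link A {v} := fun hc => hmem ((link_insert_mem G.2 hxv).mp hc)
    rw [dif_neg hlk, dif_neg hmem, smul_zero]

lemma bdry_ext {A : Set (Finset V)} (v : V) (c : TotalChains 𝕜 (delV A v)) :
    bdryMap 𝕜 A (extC 𝕜 A v c) = extC 𝕜 A v (bdryMap 𝕜 (delV A v) c) := by
  funext τ
  by_cases hv : v ∈ τ.1
  · rw [bdryMap_apply]
    have hR : extC 𝕜 A v (bdryMap 𝕜 (delV A v) c) τ = 0 := by
      simp only [extC]
      rw [dif_neg (fun h => h hv)]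
    rw [hR]
    refine Finset.sum_eq_zero fun x hx => ?_
    by_cases hmem : insert x τ.1 ∈ A
    · rw [dif_pos hmem]
      have : extC 𝕜 A v c ⟨insert x τ.1, hmem⟩ = 0 := by
        simp only [extC]
        rw [dif_neg (fun h => h (Finset.mem_insert_of_mem hv))]
      rw [this, smul_zero]
    · rw [dif_neg hmem]
  · have hτd : τ.1 ∈ delV A v := ⟨τ.2, hv⟩
    have hR : extC 𝕜 A v (bdryMap 𝕜 (delV A v) c) τ
        = bdryMap 𝕜 (delV A v) c ⟨τ.1, hτd⟩ := by
      simp only [extC]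
      rw [dif_pos hv]
    rw [hR, bdryMap_apply, bdryMap_apply]
    refine Finset.sum_congr rfl fun x hx => ?_
    dsimp only
    by_cases hxv : x = v
    · have hvm : v ∈ insert x τ.1 := Finset.mem_insert.mpr (Or.inl hxv.symm)
      rw [dif_neg (fun (hc : insert x τ.1 ∈ delV A v) => hc.2 hvm)]
      by_cases hmem : insert x τ.1 ∈ A
      · rw [dif_pos hmem]
        have h0 : extC 𝕜 A v c ⟨insert x τ.1, hmem⟩ = 0 := by
          simp only [extC]
          rw [dif_neg (fun h => h hvm)]
        rw [h0, smul_zero]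
      · rw [dif_neg hmem]
    · have hvi : v ∉ insert x τ.1 := by
        simp only [Finset.mem_insert]
        push_neg
        exact ⟨fun h => hxv h.symm, hv⟩
      by_cases hmem : insert x τ.1 ∈ A
      · rw [dif_pos hmem, dif_pos (c := insert x τ.1 ∈ delV A v) ⟨hmem, hvi⟩]
        have : extC 𝕜 A v c ⟨insert x τ.1, hmem⟩ = c ⟨insert x τ.1, ⟨hmem, hvi⟩⟩ := by
          simp only [extC]
          rw [dif_pos hvi]
        rw [this]
      · rw [dif_neg hmem, dif_neg (fun (hc : insert x τ.1 ∈ delV A v) => hmem hc.1)]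

lemma bdry_restr {A : Set (Finset V)} (v : V) (y : TotalChains 𝕜 A)
    (hy : ∀ τ : {s : Finset V // s ∈ A}, v ∈ τ.1 → y τ = 0) :
    bdryMap 𝕜 (delV A v) (restrC 𝕜 A v y) = restrC 𝕜 A v (bdryMap 𝕜 A y) := by
  funext τ
  simp only [restrC]
  rw [bdryMap_apply, bdryMap_apply]
  refine Finset.sum_congr rfl fun x hx => ?_
  dsimp only
  by_cases hxv : x = v
  · have hvm : v ∈ insert x τ.1 := Finset.mem_insert.mpr (Or.inl hxv.symm)
    rw [dif_neg (fun (hc : insert x τ.1 ∈ delV A v) => hc.2 hvm)]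
    by_cases hmem : insert x τ.1 ∈ A
    · rw [dif_pos hmem, hy _ hvm, smul_zero]
    · rw [dif_neg hmem]
  · have hvi : v ∉ insert x τ.1 := by
      simp only [Finset.mem_insert]
      push_neg
      exact ⟨fun h => hxv h.symm, τ.2.2⟩
    by_cases hmem : insert x τ.1 ∈ A
    · rw [dif_pos (c := insert x τ.1 ∈ delV A v) ⟨hmem, hvi⟩, dif_pos hmem]
      simp only [restrC]
    · rw [dif_neg hmem, dif_neg (fun (hc : insert x τ.1 ∈ delV A v) => hmem hc.1)]

lemma ext_restr {A : Set (Finset V)} (v : V) (y : TotalChains 𝕜 A)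
    (hy : ∀ τ : {s : Finset V // s ∈ A}, v ∈ τ.1 → y τ = 0) :
    extC 𝕜 A v (restrC 𝕜 A v y) = y := by
  funext τ
  simp only [extC, restrC]
  by_cases hv : v ∉ τ.1
  · rw [dif_pos hv]
  · rw [dif_neg hv]
    exact (hy τ (not_not.mp hv)).symm

end PRDev3
section PRDev4
variable {𝕜 : Type} [Field 𝕜] {V : Type} [DecidableEq V] [Fintype V]

lemma contr_deg {A : Set (Finset V)} (v : V) {z : TotalChains 𝕜 A} {j : ℤ}
    (hz : z ∈ degChains 𝕜 A j) : contrC 𝕜 A v z ∈ degChains 𝕜 (link A {v}) (j - 1) := by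
  intro G hG
  simp only [contrC]
  have hvG : v ∉ G.1 := (mem_link_iff.mp G.2).1
  have hc : (((insert v G.1).card : ℕ) : ℤ) ≠ j + 1 := by
    rw [Finset.card_insert_of_notMem hvG]
    push_cast
    omega
  rw [hz _ hc, smul_zero]

lemma cone_deg {A : Set (Finset V)} (v : V) {p : TotalChains 𝕜 (link A {v})} {j : ℤ}
    (hp : p ∈ degChains 𝕜 (link A {v}) j) : coneC 𝕜 A v p ∈ degChains 𝕜 A (j + 1) := by
  intro τ hτ
  simp only [coneC]
  by_cases h : v ∈ τ.1
  · rw [dif_pos h]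
    have h1 : 1 ≤ τ.1.card := Finset.card_pos.mpr ⟨v, h⟩
    have hc : (((τ.1.erase v).card : ℕ) : ℤ) ≠ j + 1 := by
      rw [Finset.card_erase_of_mem h]
      rw [Int.ofNat_sub h1]
      push_cast
      omega
    rw [hp _ hc, smul_zero]
  · rw [dif_neg h]

lemma ext_deg {A : Set (Finset V)} (v : V) {c : TotalChains 𝕜 (delV A v)} {j : ℤ}
    (hc : c ∈ degChains 𝕜 (delV A v) j) : extC 𝕜 A v c ∈ degChains 𝕜 A j := by
  intro τ hτ
  simp only [extC]
  by_cases h : v ∉ τ.1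
  · rw [dif_pos h]
    exact hc _ hτ
  · rw [dif_neg h]

lemma restr_deg {A : Set (Finset V)} (v : V) {c : TotalChains 𝕜 A} {j : ℤ}
    (hc : c ∈ degChains 𝕜 A j) : restrC 𝕜 A v c ∈ degChains 𝕜 (delV A v) j :=
  fun τ hτ => hc ⟨τ.1, τ.2.1⟩ hτ

lemma bdry_deg {A : Set (Finset V)} {c : TotalChains 𝕜 A} {j : ℤ}
    (hc : c ∈ degChains 𝕜 A (j + 1)) : bdryMap 𝕜 A c ∈ degChains 𝕜 A j := by
  intro τ hτ
  rw [bdryMap_apply]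
  refine Finset.sum_eq_zero fun x hx => ?_
  by_cases h : insert x τ.1 ∈ A
  · rw [dif_pos h]
    have hxτ : x ∉ τ.1 := Finset.mem_compl.mp hx
    have hc2 : (((insert x τ.1).card : ℕ) : ℤ) ≠ (j + 1) + 1 := by
      rw [Finset.card_insert_of_notMem hxτ]
      push_cast
      omega
    rw [hc _ hc2, smul_zero]
  · rw [dif_neg h]

lemma restr_ext {A : Set (Finset V)} (v : V) (c : TotalChains 𝕜 (delV A v)) :
    restrC 𝕜 A v (extC 𝕜 A v c) = c := by
  funext τ
  simp only [restrC, extC]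
  rw [dif_pos τ.2.2]

/-- Triviality of the `i`-th reduced homology, phrased at the chain level. -/
def HomTriv (𝕜 : Type) [Field 𝕜] {V : Type} [DecidableEq V] [Fintype V]
    (M : Set (Finset V)) (i : ℤ) : Prop :=
  ∀ z : TotalChains 𝕜 M, z ∈ degChains 𝕜 M i → bdryMap 𝕜 M z = 0 →
    ∃ u ∈ degChains 𝕜 M (i + 1), bdryMap 𝕜 M u = z

lemma subsingleton_iff_homTriv {M : Set (Finset V)} {i : ℤ} :
    Subsingleton (redHomology 𝕜 M i) ↔ HomTriv 𝕜 M i := by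
  constructor
  · intro hs z hz hcyc
    have hmem : z ∈ degChains 𝕜 M i ⊓ LinearMap.ker (bdryMap 𝕜 M) :=
      Submodule.mem_inf.mpr ⟨hz, LinearMap.mem_ker.mpr hcyc⟩
    have h0 : (Submodule.Quotient.mk (⟨z, hmem⟩ :
        ↥(degChains 𝕜 M i ⊓ LinearMap.ker (bdryMap 𝕜 M)))
        : redHomology 𝕜 M i) = 0 := Subsingleton.elim _ _
    rw [Submodule.Quotient.mk_eq_zero] at h0
    have h1 := Submodule.mem_comap.mp h0
    obtain ⟨u, hu, hbu⟩ := Submodule.mem_map.mp h1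
    exact ⟨u, hu, hbu⟩
  · intro h
    refine Submodule.Quotient.subsingleton_iff.mpr ?_
    rw [Submodule.eq_top_iff']
    intro X
    obtain ⟨u, hu, hbu⟩ := h X.1 (Submodule.mem_inf.mp X.2).1
      (LinearMap.mem_ker.mp (Submodule.mem_inf.mp X.2).2)
    exact Submodule.mem_comap.mpr (Submodule.mem_map.mpr ⟨u, hu, hbu⟩)

lemma nontrivial_iff_not_homTriv {M : Set (Finset V)} {i : ℤ} :
    Nontrivial (redHomology 𝕜 M i) ↔ ¬ HomTriv 𝕜 M i := by
  rw [← subsingleton_iff_homTriv, ← not_subsingleton_iff_nontrivial]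

lemma homTriv_of_no_faces {M : Set (Finset V)} {i : ℤ}
    (h : ∀ s : Finset V, s ∈ M → ((s.card : ℕ) : ℤ) ≠ i + 1) : HomTriv 𝕜 M i := by
  intro z hz _
  refine ⟨0, Submodule.zero_mem _, ?_⟩
  rw [map_zero]
  funext τ
  exact (hz τ (h _ τ.2)).symm

lemma exists_face_of_not_homTriv {M : Set (Finset V)} {i : ℤ} (h : ¬ HomTriv 𝕜 M i) :
    ∃ s ∈ M, ((s.card : ℕ) : ℤ) = i + 1 := by
  by_contra hc
  push_neg at hc
  exact h (homTriv_of_no_faces hc)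

lemma MV1 {A : Set (Finset V)} (hA : IsComplex A) (v : V) (j : ℤ)
    (hlk : HomTriv 𝕜 (link A {v}) (j - 1)) (hdel : HomTriv 𝕜 (delV A v) j) :
    HomTriv 𝕜 A j := by
  intro z hz hcyc
  have hwdeg : contrC 𝕜 A v z ∈ degChains 𝕜 (link A {v}) (j - 1) := contr_deg v hz
  have hwcyc : bdryMap 𝕜 (link A {v}) (contrC 𝕜 A v z) = 0 := by
    funext G
    rw [bdry_contr, hcyc]
    simp
  obtain ⟨p, hpdeg, hpb⟩ := hlk _ hwdeg hwcyc
  rw [show j - 1 + 1 = j by ring] at hpdeg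
  set y := z + bdryMap 𝕜 A (coneC 𝕜 A v p) with hy
  have hyfree : ∀ τ : {s : Finset V // s ∈ A}, v ∈ τ.1 → y τ = 0 := by
    intro τ hv
    have hG : τ.1.erase v ∈ link A {v} := erase_mem_link τ.2 hv
    have hτeq : τ = ⟨insert v (τ.1.erase v),
        insert_mem_of_mem_link hG⟩ := Subtype.ext (Finset.insert_erase hv).symm
    show z τ + bdryMap 𝕜 A (coneC 𝕜 A v p) τ = 0
    rw [hτeq, bdry_cone v p ⟨τ.1.erase v, hG⟩, hpb]
    simp only [contrC]
    rw [smul_smul, neg_mul, bdrySign_mul_self, neg_smul, one_smul]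
    exact add_neg_cancel _
  have hydeg : y ∈ degChains 𝕜 A j :=
    Submodule.add_mem _ hz (bdry_deg (cone_deg v hpdeg))
  have hycyc : bdryMap 𝕜 A y = 0 := by
    rw [hy, map_add, hcyc, bdry_bdry hA, add_zero]
  have hrcyc : bdryMap 𝕜 (delV A v) (restrC 𝕜 A v y) = 0 := by
    rw [bdry_restr v y hyfree, hycyc]
    rfl
  obtain ⟨r, hrdeg2, hrb⟩ := hdel _ (restr_deg v hydeg) hrcyc
  refine ⟨extC 𝕜 A v r - coneC 𝕜 A v p, ?_, ?_⟩
  · exact Submodule.sub_mem _ (ext_deg v hrdeg2) (cone_deg v hpdeg)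
  · rw [map_sub, bdry_ext, hrb, ext_restr v y hyfree, hy]
    exact add_sub_cancel_right _ _
lemma MV2 {A : Set (Finset V)} (hA : IsComplex A) (v : V) (d : ℤ)
    (hlk : HomTriv 𝕜 (link A {v}) d) (hA2 : HomTriv 𝕜 A d) : HomTriv 𝕜 (delV A v) d := by
  intro w hw hwcyc
  have hWdeg : extC 𝕜 A v w ∈ degChains 𝕜 A d := ext_deg v hw
  have hWcyc : bdryMap 𝕜 A (extC 𝕜 A v w) = 0 := by
    rw [bdry_ext, hwcyc]
    funext τ
    simp only [extC]
    split <;> rfl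
  obtain ⟨u, hudeg, hub⟩ := hA2 _ hWdeg hWcyc
  have hbdeg : contrC 𝕜 A v u ∈ degChains 𝕜 (link A {v}) d := by
    have h1 := contr_deg v hudeg
    rwa [show d + 1 - 1 = d by ring] at h1
  have hbcyc : bdryMap 𝕜 (link A {v}) (contrC 𝕜 A v u) = 0 := by
    funext G
    rw [bdry_contr, hub]
    have h0 : extC 𝕜 A v w ⟨insert v G.1, insert_mem_of_mem_link G.2⟩ = 0 := by
      simp only [extC]
      rw [dif_neg (fun h => h (Finset.mem_insert_self v G.1))]
    rw [h0, smul_zero]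
    rfl
  obtain ⟨p, hpdeg, hpb⟩ := hlk _ hbdeg hbcyc
  set u' := u + bdryMap 𝕜 A (coneC 𝕜 A v p) with hu'
  have hufree : ∀ τ : {s : Finset V // s ∈ A}, v ∈ τ.1 → u' τ = 0 := by
    intro τ hv
    have hG : τ.1.erase v ∈ link A {v} := erase_mem_link τ.2 hv
    have hτeq : τ = ⟨insert v (τ.1.erase v),
        insert_mem_of_mem_link hG⟩ := Subtype.ext (Finset.insert_erase hv).symm
    show u τ + bdryMap 𝕜 A (coneC 𝕜 A v p) τ = 0
    rw [hτeq, bdry_cone v p ⟨τ.1.erase v, hG⟩, hpb]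
    simp only [contrC]
    rw [smul_smul, neg_mul, bdrySign_mul_self, neg_smul, one_smul]
    exact add_neg_cancel _
  have hubd : bdryMap 𝕜 A u' = extC 𝕜 A v w := by
    rw [hu', map_add, hub, bdry_bdry hA, add_zero]
  refine ⟨restrC 𝕜 A v u', restr_deg v ?_, ?_⟩
  · exact Submodule.add_mem _ hudeg (bdry_deg (by
      have := cone_deg v hpdeg
      rwa [show d + 1 + 1 = (d + 1) + 1 by ring] at this))
  · rw [bdry_restr v u' hufree, hubd, restr_ext]

end PRDev4
section PRDev5
variable {𝕜 : Type} [Field 𝕜] {V : Type} [DecidableEq V] [Fintype V]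

lemma res_eq_self_of {M : Set (Finset V)} {W : Finset V} (h : ∀ s ∈ M, s ⊆ W) :
    res M W = M := Set.ext fun s => ⟨fun hs => hs.1, fun hs => ⟨hs, h s hs⟩⟩

lemma delV_res (M : Set (Finset V)) (W : Finset V) (v : V) :
    delV (res M W) v = res M (W.erase v) := by
  ext s
  constructor
  · rintro ⟨⟨h1, h2⟩, h3⟩
    exact ⟨h1, Finset.subset_erase.mpr ⟨h2, h3⟩⟩
  · rintro ⟨h1, h2⟩
    exact ⟨⟨h1, h2.trans (Finset.erase_subset v W)⟩, (Finset.subset_erase.mp h2).2⟩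

lemma link_res_link {K : Set (Finset V)} {σ : Finset V} {v : V} {W : Finset V}
    (hv : v ∉ σ) (hvW : v ∈ W) :
    link (res (link K σ) W) {v} = res (link K (insert v σ)) (W.erase v) := by
  ext τ
  change τ ∈ link (res (link K σ) W) {v} ↔ τ ∈ res (link K (insert v σ)) (W.erase v)
  rw [mem_link_iff]
  constructor
  · rintro ⟨h1, ⟨hdisj, hmem⟩, hsub⟩
    have hd := (Finset.disjoint_insert_right.mp hdisj).2
    refine ⟨⟨Finset.disjoint_insert_left.mpr ⟨h1, hd⟩, ?_⟩,
      Finset.subset_erase.mpr ⟨(Finset.insert_subset_iff.mp hsub).2, h1⟩⟩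
    rw [Finset.insert_union]
    rwa [Finset.union_insert] at hmem
  · rintro ⟨⟨hdisj, hmem⟩, hsub⟩
    have hd := Finset.disjoint_insert_left.mp hdisj
    have hse := Finset.subset_erase.mp hsub
    refine ⟨hd.1, ⟨⟨Finset.disjoint_insert_right.mpr ⟨hv, hd.2⟩, ?_⟩,
      Finset.insert_subset_iff.mpr ⟨hvW, hse.1⟩⟩⟩
    rw [Finset.union_insert]
    rwa [Finset.insert_union] at hmem

lemma D1 {K : Set (Finset V)} (hK : IsComplex K) (σ : Finset V) (j : ℤ) (hj : 0 ≤ j) :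
    ∀ W : Finset V, ¬ HomTriv 𝕜 (res (link K σ) W) j →
      ∃ v ∉ σ, ∃ W' : Finset V, ¬ HomTriv 𝕜 (res (link K (insert v σ)) W') (j - 1) := by
  intro W
  induction W using Finset.strongInduction with
  | _ W ih =>
    intro hW
    rcases Finset.eq_empty_or_nonempty W with hWe | ⟨v, hv⟩
    · subst hWe
      refine (hW (homTriv_of_no_faces fun s hs => ?_)).elim
      have hs0 : s = ∅ := Finset.subset_empty.mp hs.2
      subst hs0
      simp only [Finset.card_empty, Nat.cast_zero]
      omega
    · have hAc : IsComplex (res (link K σ) W) := res_isComplex (link_isComplex hK σ) W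
      by_cases hL : HomTriv 𝕜 (link (res (link K σ) W) {v}) (j - 1)
      · have hdel : ¬ HomTriv 𝕜 (delV (res (link K σ) W) v) j :=
          fun hD => hW (MV1 hAc v j hL hD)
        rw [delV_res] at hdel
        exact ih (W.erase v) (Finset.erase_ssubset hv) hdel
      · by_cases hvσ : v ∈ σ
        · refine (hL (homTriv_of_no_faces fun s hs => ?_)).elim
          exact absurd (Finset.mem_union_left s (Finset.mem_singleton_self v))
            (Finset.disjoint_left.mp hs.2.1.1 hvσ)
        · refine ⟨v, hvσ, W.erase v, ?_⟩
          rwa [link_res_link hvσ hv] at hL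

lemma Elem {K : Set (Finset V)} (hK : IsComplex K) (d : ℤ) :
    ∀ n : ℕ, ∀ ρ W : Finset V,
      (Fintype.card V + 1) * (Fintype.card V - ρ.card) + (Fintype.card V - W.card) ≤ n →
      ¬ HomTriv 𝕜 (res (link K ρ) W) d →
      ∃ τ : Finset V, ρ.card ≤ τ.card ∧ ¬ HomTriv 𝕜 (link K τ) d := by
  intro n
  induction n using Nat.strong_induction_on with
  | _ n ih =>
    intro ρ W hm hW
    by_cases hall : ∀ s ∈ link K ρ, s ⊆ W
    · refine ⟨ρ, le_refl _, ?_⟩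
      rwa [res_eq_self_of hall] at hW
    · push_neg at hall
      obtain ⟨s, hs, hsnW⟩ := hall
      obtain ⟨u, hus, huW⟩ := Finset.not_subset.mp hsnW
      have huρ : u ∉ ρ := fun hc => Finset.disjoint_left.mp hs.1 hc hus
      have hA : IsComplex (res (link K ρ) (insert u W)) :=
        res_isComplex (link_isComplex hK ρ) (insert u W)
      have hdel : ¬ HomTriv 𝕜 (delV (res (link K ρ) (insert u W)) u) d := by
        rw [delV_res, Finset.erase_insert huW]
        exact hW
      have hρV : ρ.card < Fintype.card V := by
        have h1 : (insert u ρ).card ≤ Fintype.card V := Finset.card_le_univ _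
        rw [Finset.card_insert_of_notMem huρ] at h1
        omega
      have hWV : W.card < Fintype.card V := by
        have h1 : (insert u W).card ≤ Fintype.card V := Finset.card_le_univ _
        rw [Finset.card_insert_of_notMem huW] at h1
        omega
      have hmsplit : (Fintype.card V + 1) * (Fintype.card V - ρ.card)
          = (Fintype.card V + 1) * (Fintype.card V - (ρ.card + 1)) + (Fintype.card V + 1) := by
        have e1 : Fintype.card V - ρ.card = (Fintype.card V - (ρ.card + 1)) + 1 := by omega
        rw [e1, Nat.mul_add, Nat.mul_one]
      by_cases hcase : HomTriv 𝕜 (link (res (link K ρ) (insert u W)) {u}) d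
      · have hAn : ¬ HomTriv 𝕜 (res (link K ρ) (insert u W)) d :=
          fun h2 => hdel (MV2 hA u d hcase h2)
        have hlt : (Fintype.card V + 1) * (Fintype.card V - ρ.card)
            + (Fintype.card V - (insert u W).card) < n := by
          rw [Finset.card_insert_of_notMem huW]
          omega
        exact ih _ hlt ρ (insert u W) le_rfl hAn
      · rw [link_res_link huρ (Finset.mem_insert_self u W), Finset.erase_insert huW] at hcase
        have hlt : (Fintype.card V + 1) * (Fintype.card V - (insert u ρ).card)
            + (Fintype.card V - W.card) < n := by
          rw [Finset.card_insert_of_notMem huρ]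
          omega
        obtain ⟨τ, hc, hτ⟩ := ih _ hlt (insert u ρ) W le_rfl hcase
        refine ⟨τ, ?_, hτ⟩
        rw [Finset.card_insert_of_notMem huρ] at hc
        omega

lemma descent {K : Set (Finset V)} (hK : IsComplex K) (σ : Finset V) (j : ℤ) (hj : 0 ≤ j)
    (h : ¬ HomTriv 𝕜 (link K σ) j) :
    ∃ τ : Finset V, σ.card < τ.card ∧ ¬ HomTriv 𝕜 (link K τ) (j - 1) := by
  have h0 : ¬ HomTriv 𝕜 (res (link K σ) Finset.univ) j := by
    rwa [res_eq_self_of fun s _ => Finset.subset_univ s]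
  obtain ⟨v, hvσ, W', hW'⟩ := D1 hK σ j hj Finset.univ h0
  obtain ⟨τ, hcard, hτ⟩ := Elem hK (j - 1) _ (insert v σ) W' le_rfl hW'
  rw [Finset.card_insert_of_notMem hvσ] at hcard
  exact ⟨τ, by omega, hτ⟩

end PRDev5
/-- **Homology degrees decrease as face size increases in a PR complex.** If `Δ` is PR
and `σ₁, σ₂` are faces whose links have nontrivial reduced homology in degrees `i₁`
and `i₂` respectively, then `|σ₁| < |σ₂|` implies `i₁ > i₂`. -/
theorem homology_degree_antitone_of_isPR (𝕜 : Type) [Field 𝕜] {V : Type} [DecidableEq V]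
    [Fintype V] (K : Set (Finset V)) (hK : IsComplex K) (hPR : IsPR 𝕜 K)
    (σ₁ σ₂ : Finset V) (h₁ : σ₁ ∈ K) (h₂ : σ₂ ∈ K) (i₁ i₂ : ℤ)
    (hh₁ : Nontrivial (redHomology 𝕜 (link K σ₁) i₁))
    (hh₂ : Nontrivial (redHomology 𝕜 (link K σ₂) i₂))
    (hcard : σ₁.card < σ₂.card) : i₂ < i₁ := by
  have h1 : ¬ HomTriv 𝕜 (link K σ₁) i₁ := nontrivial_iff_not_homTriv.mp hh₁
  have h2 : ¬ HomTriv 𝕜 (link K σ₂) i₂ := nontrivial_iff_not_homTriv.mp hh₂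
  have hi1 : -1 ≤ i₁ := by
    obtain ⟨s, _, hcs⟩ := exists_face_of_not_homTriv h1
    have hnn : (0 : ℤ) ≤ (s.card : ℤ) := Int.ofNat_nonneg _
    omega
  by_contra hcon
  push_neg at hcon
  have key : ∀ k : ℕ, (k : ℤ) ≤ i₂ - i₁ → ∃ τ : Finset V,
      σ₂.card + k ≤ τ.card ∧ ¬ HomTriv 𝕜 (link K τ) (i₂ - k) := by
    intro k
    induction k with
    | zero =>
      intro _
      refine ⟨σ₂, by omega, ?_⟩
      simpa using h2
    | succ k ihk =>
      intro hk
      obtain ⟨τ, hτc, hτ⟩ := ihk (by push_cast at hk ⊢; omega)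
      have hdeg : (0 : ℤ) ≤ i₂ - k := by push_cast at hk; omega
      obtain ⟨τ', hc', hτ'⟩ := descent hK τ (i₂ - k) hdeg hτ
      refine ⟨τ', by omega, ?_⟩
      have he : i₂ - (k : ℤ) - 1 = i₂ - ((k + 1 : ℕ) : ℤ) := by push_cast; ring
      rwa [he] at hτ'
  rcases eq_or_lt_of_le hcon with heq | hlt
  · have := hPR i₁ hi1 σ₁ h₁ σ₂ h₂ hh₁ (heq ▸ hh₂)
    omega
  · have hk : ((i₂ - i₁).toNat : ℤ) = i₂ - i₁ := Int.toNat_of_nonneg (by omega)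
    obtain ⟨τ, hτc, hτ⟩ := key (i₂ - i₁).toNat (le_of_eq hk)
    have hτK : τ ∈ K := by
      obtain ⟨s, hs, _⟩ := exists_face_of_not_homTriv hτ
      exact hK _ hs.2 _ Finset.subset_union_left
    have hdeg : i₂ - ((i₂ - i₁).toNat : ℤ) = i₁ := by omega
    rw [hdeg] at hτ
    have hPReq := hPR i₁ hi1 σ₁ h₁ τ hτK hh₁ (nontrivial_iff_not_homTriv.mpr hτ)
    omega
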